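/- Every wald topology E' with fewer than 2N−3 splits can be extended: there exists a wald topology E with |E| = |E'| + 1 and E' < E. -/
import Mathlib


attribute [local instance] Classical.propDecidable

/-- A split: an unordered pair of finite sets of labels. -/
abbrev Split (N : ℕ) := Sym2 (Finset (Fin N))

namespace Wald

variable {N : ℕ}

/-- `e` is a split of the block `M`: `e = {A, B}` with `A, B` a partition of `M`
into two nonempty parts. -/
def IsSplitOf (e : Split N) (M : Finset (Fin N)) : Prop :=
  ∃ A B : Finset (Fin N), e = s(A, B) ∧ A ∪ B = M ∧ Disjoint A B ∧
    A.Nonempty ∧ B.Nonempty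

/-- Two splits `A|B` and `C|D` are compatible if one of the four intersections
`A∩C, A∩D, B∩C, B∩D` is empty. -/
def Compatible (e f : Split N) : Prop :=
  ∃ A B C D : Finset (Fin N), e = s(A, B) ∧ f = s(C, D) ∧
    (A ∩ C = ∅ ∨ A ∩ D = ∅ ∨ B ∩ C = ∅ ∨ B ∩ D = ∅)

/-- The split `e = A|B` separates `u` and `v` if `u ∈ A` and `v ∈ B` (or vice versa). -/
def Separates (e : Split N) (u v : Fin N) : Prop :=
  ∃ A B : Finset (Fin N), e = s(A, B) ∧ u ∈ A ∧ v ∈ B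

/-- The restriction `e|_{L'}` of a split `e = A|B`: `(A ∩ L')|(B ∩ L')`. -/
def restrict (e : Split N) (L' : Finset (Fin N)) : Split N :=
  Sym2.map (· ∩ L') e

/-- The underlying block `A ∪ B` of a split `e = A|B`. -/
def blockOf (e : Split N) : Finset (Fin N) :=
  Sym2.lift ⟨fun A B => A ∪ B, fun _ _ => Finset.union_comm _ _⟩ e

/-- The restriction of `e = A|B` to `L'` is a valid split iff both
`A ∩ L'` and `B ∩ L'` are nonempty. -/
def ValidRestrict (e : Split N) (L' : Finset (Fin N)) : Prop :=
  ∃ A B : Finset (Fin N), e = s(A, B) ∧ (A ∩ L').Nonempty ∧ (B ∩ L').Nonempty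

/-- A wald topology on the label set `{1,…,N}`: a partition of the labels into
blocks, together with a set of splits of the blocks, such that splits of a common
block are pairwise compatible and any two distinct labels of a common block are
separated by some split. -/
structure WaldTop (N : ℕ) where
  blocks : Finset (Finset (Fin N))
  splits : Finset (Split N)
  nonempty_blocks : ∀ B ∈ blocks, B.Nonempty
  cover : ∀ u : Fin N, ∃! B, B ∈ blocks ∧ u ∈ B
  split_mem : ∀ e ∈ splits, ∃ B ∈ blocks, IsSplitOf e B
  compat : ∀ e ∈ splits, ∀ f ∈ splits, blockOf e = blockOf f → Compatible e f
  separating : ∀ B ∈ blocks, ∀ u ∈ B, ∀ v ∈ B, u ≠ v →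
    ∃ e ∈ splits, Separates e u v

/-- The partial order `E' ≤ E` on wald topologies: refinement of the leaf
partitions, restriction of splits, and the cut property. -/
def LE' (E' E : WaldTop N) : Prop :=
  (∀ B' ∈ E'.blocks, ∃ B ∈ E.blocks, B' ⊆ B) ∧
  (∀ e' ∈ E'.splits, ∃ e ∈ E.splits, restrict e (blockOf e') = e') ∧
  (∀ B₁ ∈ E'.blocks, ∀ B₂ ∈ E'.blocks, B₁ ≠ B₂ →
    ∀ B ∈ E.blocks, B₁ ⊆ B → B₂ ⊆ B →
      ∃ A C : Finset (Fin N), s(A, C) ∈ E.splits ∧ B₁ ⊆ A ∧ B₂ ⊆ C)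

/-- `R_{e'}`: the splits of `E` whose restriction to the block of `e'` equals `e'`. -/
def Rset (E : WaldTop N) (e' : Split N) : Set (Split N) :=
  {e | e ∈ E.splits ∧ restrict e (blockOf e') = e'}

/-- `R_dis`: the splits of `E` admitting a valid restriction to some block of `E'`
which does not belong to `E'`. -/
def Rdis (E' E : WaldTop N) : Set (Split N) :=
  {e | e ∈ E.splits ∧ ∃ B' ∈ E'.blocks, ValidRestrict e B' ∧ restrict e B' ∉ E'.splits}

/-- `R_cut`: the splits of `E` admitting no valid restriction to any block of `E'`. -/
def Rcut (E' E : WaldTop N) : Set (Split N) :=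
  {e | e ∈ E.splits ∧ ∀ B' ∈ E'.blocks, ¬ ValidRestrict e B'}

/-- `E(u,v)`: the set of splits of `E` separating `u` and `v`. -/
def sepSet (E : WaldTop N) (u v : Fin N) : Set (Split N) :=
  {e | e ∈ E.splits ∧ Separates e u v}

end Wald

open Finset

variable {α : Type*} [DecidableEq α]

lemma laminar_extend : ∀ (n : ℕ) (Y : Finset α) (F : Finset (Finset α)),
    Y.card ≤ n → Y.Nonempty →
    (∀ A ∈ F, A ⊆ Y) → (∀ A ∈ F, A.Nonempty) →
    (∀ A ∈ F, ∀ B ∈ F, A ⊆ B ∨ B ⊆ A ∨ A ∩ B = ∅) →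
    F.card < 2 * Y.card - 1 →
    ∃ C, C ∉ F ∧ C ⊆ Y ∧ C.Nonempty ∧
      ∀ A ∈ F, C ⊆ A ∨ A ⊆ C ∨ C ∩ A = ∅ := by
  intro n
  induction n with
  | zero =>
    intro Y F hYn hYne _ _ _ _
    rw [Nat.le_zero, Finset.card_eq_zero] at hYn
    simp [hYn] at hYne
  | succ n ih =>
    intro Y F hYn hYne hsub hne hlam hF
    -- Step 1: if some singleton is missing, add it
    by_cases hsing : ∀ y ∈ Y, ({y} : Finset α) ∈ F
    swap
    · push_neg at hsing
      obtain ⟨y, hy, hyF⟩ := hsing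
      refine ⟨{y}, hyF, by simpa using hy, ⟨y, by simp⟩, ?_⟩
      intro A hA
      by_cases hyA : y ∈ A
      · exact Or.inl (by simpa using hyA)
      · right; right
        ext x; simp only [mem_inter, mem_singleton, notMem_empty, iff_false]
        rintro ⟨rfl, hx⟩; exact hyA hx
    -- Step 2: if Y itself is missing, add it
    by_cases hYF : Y ∈ F
    swap
    · exact ⟨Y, hYF, subset_rfl, hYne, fun A hA => Or.inr (Or.inl (hsub A hA))⟩
    -- Step 3: Y has at least 2 elements
    have hY2 : 2 ≤ Y.card := by
      have h1 : 1 ≤ Y.card := Finset.card_pos.mpr hYne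
      have h2 : 1 ≤ F.card := Finset.card_pos.mpr ⟨Y, hYF⟩
      omega
    -- children
    set isChild : Finset α → Prop :=
      fun D => D ∈ F ∧ D ⊂ Y ∧ ∀ E ∈ F, D ⊂ E → ¬ E ⊂ Y with hisChild
    have hcover : ∀ A ∈ F, A ⊂ Y → ∃ D, isChild D ∧ A ⊆ D := by
      intro A hA hAY
      set S := F.filter (fun E => A ⊆ E ∧ E ⊂ Y) with hS
      have hSne : S.Nonempty := ⟨A, by simp [hS, hA, hAY]⟩
      obtain ⟨D, hDS, hDmax⟩ := Finset.exists_max_image S Finset.card hSne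
      simp only [hS, mem_filter] at hDS
      refine ⟨D, ⟨hDS.1, hDS.2.2, ?_⟩, hDS.2.1⟩
      intro E hE hDE hEY
      have hES : E ∈ S := by
        simp only [hS, mem_filter]
        exact ⟨hE, hDS.2.1.trans hDE.subset, hEY⟩
      have := hDmax E hES
      have := Finset.card_lt_card hDE
      omega
    have hchdisj : ∀ D₁ D₂, isChild D₁ → isChild D₂ → D₁ ≠ D₂ → D₁ ∩ D₂ = ∅ := by
      intro D₁ D₂ h1 h2 hne12
      rcases hlam D₁ h1.1 D₂ h2.1 with h | h | h
      · exact absurd h2.2.1 (h1.2.2 D₂ h2.1 (ssubset_of_subset_of_ne h hne12))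
      · exact absurd h1.2.1 (h2.2.2 D₁ h1.1 (ssubset_of_subset_of_ne h (Ne.symm hne12)))
      · exact h
    -- singletons are proper subsets
    have hsingsub : ∀ y ∈ Y, ({y} : Finset α) ⊂ Y := by
      intro y hy
      refine Finset.ssubset_iff_subset_ne.mpr ⟨by simpa using hy, ?_⟩
      intro h
      rw [← h] at hY2
      simp at hY2
    obtain ⟨y₀, hy₀⟩ := hYne
    obtain ⟨D₁, hD₁, hy₀D₁⟩ := hcover {y₀} (hsing y₀ hy₀) (hsingsub y₀ hy₀)
    have hy₀D₁' : y₀ ∈ D₁ := hy₀D₁ (by simp)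
    obtain ⟨y₁, hy₁Y, hy₁D₁⟩ := Finset.exists_of_ssubset hD₁.2.1
    obtain ⟨D₂, hD₂, hy₁D₂⟩ := hcover {y₁} (hsing y₁ hy₁Y) (hsingsub y₁ hy₁Y)
    have hy₁D₂' : y₁ ∈ D₂ := hy₁D₂ (by simp)
    have hD12 : D₁ ≠ D₂ := fun h => hy₁D₁ (h ▸ hy₁D₂')
    by_cases hcov : ∀ z ∈ Y, z ∈ D₁ ∪ D₂
    swap
    · -- three children: add D₁ ∪ D₂
      push_neg at hcov
      obtain ⟨y₂, hy₂Y, hy₂⟩ := hcov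
      refine ⟨D₁ ∪ D₂, ?_, Finset.union_subset (hsub _ hD₁.1) (hsub _ hD₂.1),
        ⟨y₀, by simp [hy₀D₁']⟩, ?_⟩
      · intro hmem
        have hss : D₁ ⊂ D₁ ∪ D₂ := by
          refine Finset.ssubset_iff_subset_ne.mpr ⟨Finset.subset_union_left, ?_⟩
          intro h
          have : y₁ ∈ D₁ := by
            have : y₁ ∈ D₁ ∪ D₂ := by simp [hy₁D₂']
            rwa [← h] at this
          exact hy₁D₁ this
        have hssY : D₁ ∪ D₂ ⊂ Y := by
          refine Finset.ssubset_iff_subset_ne.mpr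
            ⟨Finset.union_subset (hsub _ hD₁.1) (hsub _ hD₂.1), ?_⟩
          intro h
          exact hy₂ (h ▸ hy₂Y)
        exact hD₁.2.2 _ hmem hss hssY
      · intro A hA
        by_cases hAY : A = Y
        · subst hAY
          exact Or.inl (Finset.union_subset (hsub _ hD₁.1) (hsub _ hD₂.1))
        obtain ⟨D, hD, hAD⟩ := hcover A hA (ssubset_of_subset_of_ne (hsub A hA) hAY)
        by_cases h1 : D = D₁
        · exact Or.inr (Or.inl (h1 ▸ hAD |>.trans Finset.subset_union_left))
        by_cases h2 : D = D₂
        · exact Or.inr (Or.inl (h2 ▸ hAD |>.trans Finset.subset_union_right))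
        right; right
        have e1 := hchdisj D D₁ hD hD₁ h1
        have e2 := hchdisj D D₂ hD hD₂ h2
        ext x
        simp only [mem_inter, notMem_empty, iff_false]
        rintro ⟨hx1, hx2⟩
        have hxD : x ∈ D := hAD hx2
        rcases Finset.mem_union.mp hx1 with h | h
        · have hm : x ∈ D ∩ D₁ := Finset.mem_inter.mpr ⟨hxD, h⟩
          rw [e1] at hm; simp at hm
        · have hm : x ∈ D ∩ D₂ := Finset.mem_inter.mpr ⟨hxD, h⟩
          rw [e2] at hm; simp at hm
    -- two children: recurse into one of them
    have hYsub : Y ⊆ D₁ ∪ D₂ := fun z hz => hcov z hz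
    have hDdisj : D₁ ∩ D₂ = ∅ := hchdisj _ _ hD₁ hD₂ hD12
    have hcards : Y.card = D₁.card + D₂.card := by
      have : Y = D₁ ∪ D₂ := subset_antisymm hYsub
        (Finset.union_subset (hsub _ hD₁.1) (hsub _ hD₂.1))
      rw [this]
      exact Finset.card_union_of_disjoint (Finset.disjoint_iff_inter_eq_empty.mpr hDdisj)
    have hYnotin : Y ∉ (F.filter (· ⊆ D₁)) ∪ (F.filter (· ⊆ D₂)) := by
      simp only [mem_union, mem_filter]
      rintro (⟨-, h⟩ | ⟨-, h⟩)
      · exact hD₁.2.1.ne (subset_antisymm hD₁.2.1.subset h)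
      · exact hD₂.2.1.ne (subset_antisymm hD₂.2.1.subset h)
    have hF12disj : Disjoint (F.filter (· ⊆ D₁)) (F.filter (· ⊆ D₂)) := by
      rw [Finset.disjoint_left]
      intro A hA1 hA2
      obtain ⟨x, hx⟩ := hne A (mem_filter.mp hA1).1
      have hm : x ∈ D₁ ∩ D₂ :=
        Finset.mem_inter.mpr ⟨(mem_filter.mp hA1).2 hx, (mem_filter.mp hA2).2 hx⟩
      rw [hDdisj] at hm; simp at hm
    have hcard1 : 1 + ((F.filter (· ⊆ D₁)).card + (F.filter (· ⊆ D₂)).card) ≤ F.card := by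
      have hsubF : insert Y ((F.filter (· ⊆ D₁)) ∪ (F.filter (· ⊆ D₂))) ⊆ F := by
        intro A hA
        rcases Finset.mem_insert.mp hA with rfl | hA
        · exact hYF
        · rcases Finset.mem_union.mp hA with h | h
          · exact (mem_filter.mp h).1
          · exact (mem_filter.mp h).1
      calc 1 + ((F.filter (· ⊆ D₁)).card + (F.filter (· ⊆ D₂)).card)
          = 1 + ((F.filter (· ⊆ D₁)) ∪ (F.filter (· ⊆ D₂))).card := by
            rw [Finset.card_union_of_disjoint hF12disj]
        _ = (insert Y ((F.filter (· ⊆ D₁)) ∪ (F.filter (· ⊆ D₂)))).card := by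
            rw [Finset.card_insert_of_notMem hYnotin]; omega
        _ ≤ F.card := Finset.card_le_card hsubF
    have key : (F.filter (· ⊆ D₁)).card < 2 * D₁.card - 1 ∨
        (F.filter (· ⊆ D₂)).card < 2 * D₂.card - 1 := by
      have c1 : 1 ≤ D₁.card := Finset.card_pos.mpr (hne _ hD₁.1)
      have c2 : 1 ≤ D₂.card := Finset.card_pos.mpr (hne _ hD₂.1)
      omega
    have finish : ∀ D D' : Finset α, isChild D → isChild D' → D ∩ D' = ∅ → Y ⊆ D ∪ D' →
        (F.filter (· ⊆ D)).card < 2 * D.card - 1 →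
        ∃ C, C ∉ F ∧ C ⊆ Y ∧ C.Nonempty ∧
          ∀ A ∈ F, C ⊆ A ∨ A ⊆ C ∨ C ∩ A = ∅ := by
      intro D D' hD hD' hdisj hYDD hc
      have hDn : D.card ≤ n := by
        have := Finset.card_lt_card hD.2.1
        omega
      obtain ⟨C, hC1, hC2, hC3, hC4⟩ := ih D (F.filter (· ⊆ D)) hDn (hne _ hD.1)
        (fun A hA => (mem_filter.mp hA).2)
        (fun A hA => hne _ (mem_filter.mp hA).1)
        (fun A hA B hB => hlam _ (mem_filter.mp hA).1 _ (mem_filter.mp hB).1) hc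
      refine ⟨C, ?_, hC2.trans (hsub _ hD.1), hC3, ?_⟩
      · exact fun h => hC1 (mem_filter.mpr ⟨h, hC2⟩)
      intro A hA
      by_cases hAY : A = Y
      · exact Or.inl (hAY ▸ hC2.trans (hsub _ hD.1))
      obtain ⟨Dc, hDc, hADc⟩ := hcover A hA (ssubset_of_subset_of_ne (hsub A hA) hAY)
      have hDcD : Dc = D ∨ Dc = D' := by
        by_contra hcon
        push_neg at hcon
        obtain ⟨x, hx⟩ := hne Dc hDc.1
        have hxY : x ∈ Y := hsub Dc hDc.1 hx
        rcases Finset.mem_union.mp (hYDD hxY) with h | h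
        · have hm : x ∈ Dc ∩ D := Finset.mem_inter.mpr ⟨hx, h⟩
          rw [hchdisj Dc D hDc hD hcon.1] at hm; simp at hm
        · have hm : x ∈ Dc ∩ D' := Finset.mem_inter.mpr ⟨hx, h⟩
          rw [hchdisj Dc D' hDc hD' hcon.2] at hm; simp at hm
      rcases hDcD with rfl | rfl
      · exact hC4 A (mem_filter.mpr ⟨hA, hADc⟩)
      · right; right
        ext x
        simp only [mem_inter, notMem_empty, iff_false]
        rintro ⟨hx1, hx2⟩
        have hm : x ∈ D ∩ Dc := Finset.mem_inter.mpr ⟨hC2 hx1, hADc hx2⟩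
        rw [hdisj] at hm; simp at hm
    rcases key with h | h
    · exact finish D₁ D₂ hD₁ hD₂ hDdisj hYsub h
    · refine finish D₂ D₁ hD₂ hD₁ (by rw [Finset.inter_comm]; exact hDdisj)
        (by rw [Finset.union_comm]; exact hYsub) h

namespace Wald

open Finset

variable {N : ℕ}

lemma blockOf_mk (A B : Finset (Fin N)) : blockOf s(A, B) = A ∪ B := rfl

lemma restrict_mk (A B L : Finset (Fin N)) :
    restrict s(A, B) L = s(A ∩ L, B ∩ L) := rfl

lemma restrict_blockOf (e : Split N) : restrict e (blockOf e) = e := by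
  refine Sym2.inductionOn e ?_
  intro A B
  rw [blockOf_mk, restrict_mk,
    Finset.inter_eq_left.mpr Finset.subset_union_left,
    Finset.inter_eq_left.mpr Finset.subset_union_right]

lemma blocks_eq (E' : WaldTop N) {B B' : Finset (Fin N)} (hB : B ∈ E'.blocks)
    (hB' : B' ∈ E'.blocks) {x : Fin N} (hx : x ∈ B) (hx' : x ∈ B') : B = B' := by
  obtain ⟨Bu, -, huniq⟩ := E'.cover x
  rw [huniq B ⟨hB, hx⟩, huniq B' ⟨hB', hx'⟩]

/-- the side of a split not containing `r` (or `∅` if ill-defined) -/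
noncomputable def clusterOf (r : Fin N) (e : Split N) : Finset (Fin N) :=
  Sym2.lift ⟨fun A B => if r ∈ A ∧ r ∉ B then B else if r ∈ B ∧ r ∉ A then A else ∅, by
    intro A B
    by_cases h1 : r ∈ A <;> by_cases h2 : r ∈ B <;> simp [h1, h2]⟩ e

lemma clusterOf_mk₁ {r : Fin N} {A B : Finset (Fin N)} (hA : r ∈ A) (hB : r ∉ B) :
    clusterOf r s(A, B) = B := by simp [clusterOf, hA, hB]

lemma clusterOf_mk₂ {r : Fin N} {A B : Finset (Fin N)} (hA : r ∉ A) (hB : r ∈ B) :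
    clusterOf r s(A, B) = A := by simp [clusterOf, hA, hB]

lemma cluster_spec {r : Fin N} {e : Split N} (h : IsSplitOf e Finset.univ) :
    e = s(clusterOf r e, Finset.univ \ clusterOf r e) ∧ r ∉ clusterOf r e ∧
      (clusterOf r e).Nonempty := by
  obtain ⟨A, B, rfl, hun, hdisj, hAne, hBne⟩ := h
  have hr : r ∈ A ∪ B := by rw [hun]; exact Finset.mem_univ r
  have hAB : ∀ x, x ∈ A → x ∉ B := fun x hx => Finset.disjoint_left.mp hdisj hx
  have hBA : ∀ x, x ∈ B → x ∉ A := fun x hx => Finset.disjoint_right.mp hdisj hx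
  rcases Finset.mem_union.mp hr with hrA | hrB
  · have hrB : r ∉ B := hAB r hrA
    rw [clusterOf_mk₁ hrA hrB]
    have hAeq : Finset.univ \ B = A := by
      ext x
      simp only [Finset.mem_sdiff, Finset.mem_univ, true_and]
      constructor
      · intro hx
        have : x ∈ A ∪ B := by rw [hun]; exact Finset.mem_univ x
        rcases Finset.mem_union.mp this with h | h
        · exact h
        · exact absurd h hx
      · exact fun hx => hAB x hx
    refine ⟨?_, hrB, hBne⟩
    rw [hAeq]
    exact Sym2.eq_swap
  · have hrA : r ∉ A := hBA r hrB
    rw [clusterOf_mk₂ hrA hrB]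
    have hBeq : Finset.univ \ A = B := by
      ext x
      simp only [Finset.mem_sdiff, Finset.mem_univ, true_and]
      constructor
      · intro hx
        have : x ∈ A ∪ B := by rw [hun]; exact Finset.mem_univ x
        rcases Finset.mem_union.mp this with h | h
        · exact absurd h hx
        · exact h
      · exact fun hx => hBA x hx
    refine ⟨?_, hrA, hAne⟩
    rw [hBeq]

lemma compat_clusters {r : Fin N} {X Z : Finset (Fin N)}
    (hrX : r ∉ X) (hrZ : r ∉ Z)
    (h : Compatible (s(X, Finset.univ \ X) : Split N) s(Z, Finset.univ \ Z)) :
    X ⊆ Z ∨ Z ⊆ X ∨ X ∩ Z = ∅ := by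
  have hXZc : X ∩ (Finset.univ \ Z) = ∅ → X ⊆ Z := by
    intro h0 x hx
    by_contra hxZ
    have : x ∈ X ∩ (Finset.univ \ Z) := by simp [hx, hxZ]
    rw [h0] at this; simp at this
  have hXcZ : (Finset.univ \ X) ∩ Z = ∅ → Z ⊆ X := by
    intro h0 x hx
    by_contra hxX
    have : x ∈ (Finset.univ \ X) ∩ Z := by simp [hx, hxX]
    rw [h0] at this; simp at this
  have hXcZc : (Finset.univ \ X) ∩ (Finset.univ \ Z) = ∅ → False := by
    intro h0
    have : r ∈ (Finset.univ \ X) ∩ (Finset.univ \ Z) := by simp [hrX, hrZ]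
    rw [h0] at this; simp at this
  obtain ⟨A, B, C, D, he, hf, hor⟩ := h
  rcases Sym2.eq_iff.mp he with ⟨h1, h2⟩ | ⟨h1, h2⟩ <;> subst h1 <;> subst h2 <;>
    rcases Sym2.eq_iff.mp hf with ⟨h3, h4⟩ | ⟨h3, h4⟩ <;> subst h3 <;> subst h4 <;>
    rcases hor with h0 | h0 | h0 | h0 <;>
    first
      | exact Or.inr (Or.inr h0)
      | exact Or.inl (hXZc h0)
      | exact Or.inr (Or.inl (hXcZ h0))
      | exact absurd h0 (fun hh => hXcZc hh)

lemma extend_single (hN : 3 ≤ N) (E' : WaldTop N)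
    (hb : E'.blocks = {Finset.univ})
    (hcard : E'.splits.card < 2 * N - 3) :
    ∃ E : WaldTop N, E.splits.card = E'.splits.card + 1 ∧ LE' E' E ∧ E ≠ E' := by
  have hNpos : 0 < N := by omega
  set r : Fin N := ⟨0, hNpos⟩ with hr
  set Y : Finset (Fin N) := Finset.univ \ {r} with hY
  have hYcard : Y.card = N - 1 := by
    rw [hY, Finset.card_sdiff_of_subset (Finset.subset_univ _)]
    simp
  have hsplituniv : ∀ e ∈ E'.splits, IsSplitOf e Finset.univ := by
    intro e he
    obtain ⟨B, hB, hs⟩ := E'.split_mem e he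
    rw [hb, Finset.mem_singleton] at hB
    rwa [hB] at hs
  have hspec : ∀ e ∈ E'.splits,
      e = s(clusterOf r e, Finset.univ \ clusterOf r e) ∧ r ∉ clusterOf r e ∧
        (clusterOf r e).Nonempty :=
    fun e he => cluster_spec (hsplituniv e he)
  have hblockuniv : ∀ e ∈ E'.splits, blockOf e = Finset.univ := by
    intro e he
    obtain ⟨hee, -, -⟩ := hspec e he
    rw [hee, blockOf_mk]
    exact Finset.union_sdiff_of_subset (Finset.subset_univ _)
  set F : Finset (Finset (Fin N)) := E'.splits.image (clusterOf r) with hF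
  have hclsubY : ∀ e ∈ E'.splits, clusterOf r e ⊆ Y := by
    intro e he x hx
    obtain ⟨-, hre, -⟩ := hspec e he
    simp only [hY, Finset.mem_sdiff, Finset.mem_univ, true_and, Finset.mem_singleton]
    rintro rfl
    exact hre hx
  obtain ⟨C, hC1, hC2, hC3, hC4⟩ := laminar_extend (N - 1) Y F (le_of_eq hYcard)
    (by rw [← Finset.card_pos, hYcard]; omega)
    (by rintro A hA
        obtain ⟨e, he, rfl⟩ := Finset.mem_image.mp hA
        exact hclsubY e he)
    (by rintro A hA
        obtain ⟨e, he, rfl⟩ := Finset.mem_image.mp hA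
        exact (hspec e he).2.2)
    (by rintro A hA B hB
        obtain ⟨e, he, rfl⟩ := Finset.mem_image.mp hA
        obtain ⟨f, hf, rfl⟩ := Finset.mem_image.mp hB
        have hcompat := E'.compat e he f hf (by rw [hblockuniv e he, hblockuniv f hf])
        rw [(hspec e he).1, (hspec f hf).1] at hcompat
        exact compat_clusters (hspec e he).2.1 (hspec f hf).2.1 hcompat)
    (by rw [hF, hYcard]
        have := Finset.card_image_le (s := E'.splits) (f := clusterOf r)
        omega)
  have hrC : r ∉ C := by
    intro h
    have := hC2 h
    simp [hY] at this
  set e₀ : Split N := s(C, Finset.univ \ C) with he₀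
  have he₀split : IsSplitOf e₀ Finset.univ :=
    ⟨C, Finset.univ \ C, rfl, Finset.union_sdiff_of_subset (Finset.subset_univ _),
      Finset.disjoint_sdiff, hC3, ⟨r, by simp [hrC]⟩⟩
  have hge₀ : clusterOf r e₀ = C := clusterOf_mk₂ hrC (by simp [hrC])
  have he₀new : e₀ ∉ E'.splits := by
    intro h
    exact hC1 (Finset.mem_image.mpr ⟨e₀, h, hge₀⟩)
  have hcompatnew : ∀ f ∈ E'.splits,
      C ∩ clusterOf r f = ∅ ∨ C ∩ (Finset.univ \ clusterOf r f) = ∅ ∨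
        (Finset.univ \ C) ∩ clusterOf r f = ∅ := by
    intro f hf
    rcases hC4 _ (Finset.mem_image.mpr ⟨f, hf, rfl⟩) with h | h | h
    · right; left
      ext x
      simp only [Finset.mem_inter, Finset.mem_sdiff, Finset.notMem_empty, iff_false]
      rintro ⟨hx1, -, hx2⟩
      exact hx2 (h hx1)
    · right; right
      ext x
      simp only [Finset.mem_inter, Finset.mem_sdiff, Finset.notMem_empty, iff_false]
      rintro ⟨⟨-, hx1⟩, hx2⟩
      exact hx1 (h hx2)
    · left; exact h
  refine ⟨⟨E'.blocks, insert e₀ E'.splits, E'.nonempty_blocks, E'.cover, ?_, ?_, ?_⟩,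
    ?_, ⟨?_, ?_, ?_⟩, ?_⟩
  · -- split_mem
    intro e he
    rcases Finset.mem_insert.mp he with rfl | he
    · exact ⟨Finset.univ, by rw [hb]; simp, he₀split⟩
    · exact E'.split_mem e he
  · -- compat
    intro e he f hf hbl
    rcases Finset.mem_insert.mp he with rfl | he <;>
      rcases Finset.mem_insert.mp hf with rfl | hf
    · exact ⟨C, Finset.univ \ C, C, Finset.univ \ C, rfl, rfl,
        Or.inr (Or.inl (by rw [Finset.inter_sdiff_self]))⟩
    · refine ⟨C, Finset.univ \ C, clusterOf r f, Finset.univ \ clusterOf r f, rfl,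
        (hspec f hf).1, ?_⟩
      rcases hcompatnew f hf with h | h | h
      · exact Or.inl h
      · exact Or.inr (Or.inl h)
      · exact Or.inr (Or.inr (Or.inl h))
    · refine ⟨clusterOf r e, Finset.univ \ clusterOf r e, C, Finset.univ \ C,
        (hspec e he).1, rfl, ?_⟩
      rcases hcompatnew e he with h | h | h
      · exact Or.inl (by rw [Finset.inter_comm]; exact h)
      · exact Or.inr (Or.inr (Or.inl (by rw [Finset.inter_comm]; exact h)))
      · exact Or.inr (Or.inl (by rw [Finset.inter_comm]; exact h))
    · exact E'.compat e he f hf hbl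
  · -- separating
    intro B hB x hx y hy hxy
    obtain ⟨e, he, hsep⟩ := E'.separating B hB x hx y hy hxy
    exact ⟨e, Finset.mem_insert_of_mem he, hsep⟩
  · -- card
    rw [Finset.card_insert_of_notMem he₀new]
  · -- LE' blocks
    exact fun B' hB' => ⟨B', hB', subset_rfl⟩
  · -- LE' splits
    intro e' he'
    exact ⟨e', Finset.mem_insert_of_mem he', restrict_blockOf e'⟩
  · -- LE' cut
    intro B₁ hB₁ B₂ hB₂ hne12
    rw [hb, Finset.mem_singleton] at hB₁ hB₂
    exact absurd (hB₁.trans hB₂.symm) hne12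
  · -- E ≠ E'
    intro h
    have h2 : (insert e₀ E'.splits).card = E'.splits.card :=
      congrArg (fun W : WaldTop N => W.splits.card) h
    rw [Finset.card_insert_of_notMem he₀new] at h2
    omega

lemma IsSplitOf.blockOf_eq {e : Split N} {B : Finset (Fin N)} (h : IsSplitOf e B) :
    blockOf e = B := by
  obtain ⟨A, C, rfl, hun, -, -, -⟩ := h
  rw [blockOf_mk]; exact hun

lemma IsSplitOf.normalize {e : Split N} {B : Finset (Fin N)} (h : IsSplitOf e B)
    {w : Fin N} (hw : w ∈ B) :
    ∃ A C : Finset (Fin N), e = s(A, C) ∧ A ∪ C = B ∧ Disjoint A C ∧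
      A.Nonempty ∧ C.Nonempty ∧ w ∉ A ∧ w ∈ C := by
  obtain ⟨A, C, rfl, hun, hdisj, hA, hC⟩ := h
  have hw' : w ∈ A ∪ C := hun ▸ hw
  rcases Finset.mem_union.mp hw' with h | h
  · exact ⟨C, A, Sym2.eq_swap, by rw [Finset.union_comm]; exact hun, hdisj.symm, hC, hA,
      Finset.disjoint_left.mp hdisj h, h⟩
  · exact ⟨A, C, rfl, hun, hdisj, hA, hC, Finset.disjoint_right.mp hdisj h, h⟩

/-- extend a set by `Bo` if it contains `u` -/
noncomputable def extFun (u : Fin N) (Bo : Finset (Fin N)) :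
    Finset (Fin N) → Finset (Fin N) :=
  fun S => if u ∈ S then S ∪ Bo else S

lemma extFun_pos {u : Fin N} {S : Finset (Fin N)} (Bo : Finset (Fin N)) (h : u ∈ S) :
    extFun u Bo S = S ∪ Bo := if_pos h

lemma extFun_neg {u : Fin N} {S : Finset (Fin N)} (Bo : Finset (Fin N)) (h : u ∉ S) :
    extFun u Bo S = S := if_neg h

lemma extFun_subset (u : Fin N) (Bo S : Finset (Fin N)) : S ⊆ extFun u Bo S := by
  unfold extFun
  split_ifs
  · exact Finset.subset_union_left
  · exact subset_rfl

/-- the split-extension map used when merging blocks `B₁` and `B₂` -/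
noncomputable def phi (B₁ B₂ : Finset (Fin N)) (u v : Fin N) (e : Split N) : Split N :=
  if blockOf e = B₁ then Sym2.map (extFun u B₂) e
  else if blockOf e = B₂ then Sym2.map (extFun v B₁) e
  else e

lemma phi_eq₁ {B₁ B₂ : Finset (Fin N)} {u v : Fin N} {e : Split N}
    (h : blockOf e = B₁) : phi B₁ B₂ u v e = Sym2.map (extFun u B₂) e := if_pos h

lemma phi_eq₂ {B₁ B₂ : Finset (Fin N)} {u v : Fin N} {e : Split N}
    (h1 : blockOf e ≠ B₁) (h2 : blockOf e = B₂) :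
    phi B₁ B₂ u v e = Sym2.map (extFun v B₁) e := by
  unfold phi
  rw [if_neg h1, if_pos h2]

lemma phi_eq₃ {B₁ B₂ : Finset (Fin N)} {u v : Fin N} {e : Split N}
    (h1 : blockOf e ≠ B₁) (h2 : blockOf e ≠ B₂) : phi B₁ B₂ u v e = e := by
  unfold phi
  rw [if_neg h1, if_neg h2]

lemma phi_separates {B₁ B₂ : Finset (Fin N)} {u v x y : Fin N} {e : Split N}
    (h : Separates e x y) : Separates (phi B₁ B₂ u v e) x y := by
  obtain ⟨P, Q, rfl, hxP, hyQ⟩ := h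
  unfold phi
  split_ifs
  · exact ⟨extFun u B₂ P, extFun u B₂ Q, by rw [Sym2.map_pair_eq],
      extFun_subset u B₂ P hxP, extFun_subset u B₂ Q hyQ⟩
  · exact ⟨extFun v B₁ P, extFun v B₁ Q, by rw [Sym2.map_pair_eq],
      extFun_subset v B₁ P hxP, extFun_subset v B₁ Q hyQ⟩
  · exact ⟨P, Q, rfl, hxP, hyQ⟩

lemma compat_of_inl {A C A' C' : Finset (Fin N)} (h : A ∩ A' = ∅) :
    Compatible (s(A, C) : Split N) s(A', C') :=
  ⟨A, C, A', C', rfl, rfl, Or.inl h⟩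

lemma compat_extend {A C A' C' Bo : Finset (Fin N)} {w : Fin N}
    (hwC : w ∈ C) (hwC' : w ∈ C') (hABo : A ∩ Bo = ∅) (hA'Bo : A' ∩ Bo = ∅)
    (h : Compatible (s(A, C) : Split N) s(A', C')) :
    Compatible (s(A, C ∪ Bo) : Split N) s(A', C' ∪ Bo) := by
  refine ⟨A, C ∪ Bo, A', C' ∪ Bo, rfl, rfl, ?_⟩
  have k1 : A ∩ A' = ∅ →
      A ∩ A' = ∅ ∨ A ∩ (C' ∪ Bo) = ∅ ∨ (C ∪ Bo) ∩ A' = ∅ ∨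
        (C ∪ Bo) ∩ (C' ∪ Bo) = ∅ := fun h0 => Or.inl h0
  have k2 : A ∩ C' = ∅ →
      A ∩ A' = ∅ ∨ A ∩ (C' ∪ Bo) = ∅ ∨ (C ∪ Bo) ∩ A' = ∅ ∨
        (C ∪ Bo) ∩ (C' ∪ Bo) = ∅ := by
    intro h0
    refine Or.inr (Or.inl ?_)
    rw [Finset.inter_union_distrib_left, h0, hABo]
    simp
  have k3 : C ∩ A' = ∅ →
      A ∩ A' = ∅ ∨ A ∩ (C' ∪ Bo) = ∅ ∨ (C ∪ Bo) ∩ A' = ∅ ∨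
        (C ∪ Bo) ∩ (C' ∪ Bo) = ∅ := by
    intro h0
    refine Or.inr (Or.inr (Or.inl ?_))
    rw [Finset.union_inter_distrib_right, h0, Finset.inter_comm, hA'Bo]
    simp
  have k4 : C ∩ C' = ∅ →
      A ∩ A' = ∅ ∨ A ∩ (C' ∪ Bo) = ∅ ∨ (C ∪ Bo) ∩ A' = ∅ ∨
        (C ∪ Bo) ∩ (C' ∪ Bo) = ∅ := by
    intro h0
    exfalso
    have : w ∈ C ∩ C' := Finset.mem_inter.mpr ⟨hwC, hwC'⟩
    rw [h0] at this; simp at this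
  obtain ⟨P, Q, R, S, hePQ, hfRS, hor⟩ := h
  rcases Sym2.eq_iff.mp hePQ with ⟨h1, h2⟩ | ⟨h1, h2⟩ <;> subst h1 <;> subst h2 <;>
    rcases Sym2.eq_iff.mp hfRS with ⟨h3, h4⟩ | ⟨h3, h4⟩ <;> subst h3 <;> subst h4 <;>
    rcases hor with h0 | h0 | h0 | h0 <;>
    first
      | exact k1 h0
      | exact k2 h0
      | exact k3 h0
      | exact k4 h0

lemma extend_merge (E' : WaldTop N) {B₁ B₂ : Finset (Fin N)}
    (h1 : B₁ ∈ E'.blocks) (h2 : B₂ ∈ E'.blocks) (h12 : B₁ ≠ B₂) :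
    ∃ E : WaldTop N, E.splits.card = E'.splits.card + 1 ∧ LE' E' E ∧ E ≠ E' := by
  obtain ⟨u, hu⟩ := E'.nonempty_blocks B₁ h1
  obtain ⟨v, hv⟩ := E'.nonempty_blocks B₂ h2
  have hd : ∀ x ∈ B₁, x ∉ B₂ := fun x hx hx' => h12 (blocks_eq E' h1 h2 hx hx')
  have hd' : ∀ x ∈ B₂, x ∉ B₁ := fun x hx hx' => h12 (blocks_eq E' h1 h2 hx' hx)
  have hdisj12 : Disjoint B₁ B₂ := Finset.disjoint_left.mpr hd
  have hint : ∀ (S T : Finset (Fin N)), (∀ x ∈ S, x ∉ T) → S ∩ T = ∅ := by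
    intro S T h
    ext x
    simp only [Finset.mem_inter, Finset.notMem_empty, iff_false]
    rintro ⟨a, b⟩
    exact h x a b
  have hd0 : B₁ ∩ B₂ = ∅ := hint B₁ B₂ hd
  set φ : Split N → Split N := phi B₁ B₂ u v with hφ
  set e₀ : Split N := s(B₁, B₂) with he₀
  have hblkmem : ∀ e ∈ E'.splits, blockOf e ∈ E'.blocks ∧ IsSplitOf e (blockOf e) := by
    intro e he
    obtain ⟨B, hB, hs⟩ := E'.split_mem e he
    rw [hs.blockOf_eq]
    exact ⟨hB, hs⟩
  have hnotB12 : ∀ e ∈ E'.splits, blockOf e ≠ B₁ → blockOf e ≠ B₂ →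
      blockOf e ≠ B₁ ∪ B₂ := by
    intro e he hn1 _ hcon
    have humem : u ∈ blockOf e := by rw [hcon]; exact Finset.mem_union_left _ hu
    exact hn1 (blocks_eq E' (hblkmem e he).1 h1 humem hu)
  have hP1 : ∀ e ∈ E'.splits, blockOf e = B₁ →
      ∃ A C, e = s(A, C) ∧ A ∪ C = B₁ ∧ Disjoint A C ∧ A.Nonempty ∧ C.Nonempty ∧
        u ∉ A ∧ u ∈ C ∧ φ e = s(A, C ∪ B₂) := by
    intro e he hbe
    have hs := (hblkmem e he).2
    rw [hbe] at hs
    obtain ⟨A, C, heq, hun, hdj, hA, hC, huA, huC⟩ := hs.normalize hu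
    refine ⟨A, C, heq, hun, hdj, hA, hC, huA, huC, ?_⟩
    rw [hφ, phi_eq₁ hbe, heq, Sym2.map_pair_eq, extFun_neg _ huA, extFun_pos _ huC]
  have hP2 : ∀ e ∈ E'.splits, blockOf e ≠ B₁ → blockOf e = B₂ →
      ∃ A C, e = s(A, C) ∧ A ∪ C = B₂ ∧ Disjoint A C ∧ A.Nonempty ∧ C.Nonempty ∧
        v ∉ A ∧ v ∈ C ∧ φ e = s(A, C ∪ B₁) := by
    intro e he hbe1 hbe
    have hs := (hblkmem e he).2
    rw [hbe] at hs
    obtain ⟨A, C, heq, hun, hdj, hA, hC, hvA, hvC⟩ := hs.normalize hv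
    refine ⟨A, C, heq, hun, hdj, hA, hC, hvA, hvC, ?_⟩
    rw [hφ, phi_eq₂ hbe1 hbe, heq, Sym2.map_pair_eq, extFun_neg _ hvA, extFun_pos _ hvC]
  have htri : ∀ e ∈ E'.splits, blockOf e = B₁ ∨ (blockOf e ≠ B₁ ∧ blockOf e = B₂) ∨
      (blockOf e ≠ B₁ ∧ blockOf e ≠ B₂ ∧ φ e = e ∧ blockOf e ≠ B₁ ∪ B₂) := by
    intro e he
    by_cases hb1 : blockOf e = B₁
    · exact Or.inl hb1
    by_cases hb2 : blockOf e = B₂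
    · exact Or.inr (Or.inl ⟨hb1, hb2⟩)
    · exact Or.inr (Or.inr ⟨hb1, hb2, by rw [hφ, phi_eq₃ hb1 hb2],
        hnotB12 e he hb1 hb2⟩)
  have hφblkB : ∀ e ∈ E'.splits, blockOf e = B₁ ∨ (blockOf e ≠ B₁ ∧ blockOf e = B₂) →
      blockOf (φ e) = B₁ ∪ B₂ := by
    intro e he h
    rcases h with hb | ⟨hb1, hb⟩
    · obtain ⟨A, C, -, hun, -, -, -, -, -, hφA⟩ := hP1 e he hb
      rw [hφA, blockOf_mk, ← Finset.union_assoc, hun]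
    · obtain ⟨A, C, -, hun, -, -, -, -, -, hφA⟩ := hP2 e he hb1 hb
      rw [hφA, blockOf_mk, ← Finset.union_assoc, hun, Finset.union_comm]
  have hcontra : ∀ S : Finset (Fin N), S.Nonempty → S ⊆ B₁ → S ⊆ B₂ → False := by
    rintro S ⟨x, hx⟩ hs1 hs2
    exact hd x (hs1 hx) (hs2 hx)
  have hcancel : ∀ (Bi Bj : Finset (Fin N)), (∀ x ∈ Bi, x ∉ Bj) →
      ∀ C C' : Finset (Fin N), C ⊆ Bi → C' ⊆ Bi → C ∪ Bj = C' ∪ Bj → C = C' := by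
    intro Bi Bj hdij C C' hC hC' h
    ext x
    constructor
    · intro hx
      have hm : x ∈ C' ∪ Bj := h ▸ Finset.mem_union_left _ hx
      rcases Finset.mem_union.mp hm with h' | h'
      · exact h'
      · exact absurd h' (hdij x (hC hx))
    · intro hx
      have hm : x ∈ C ∪ Bj := h.symm ▸ Finset.mem_union_left _ hx
      rcases Finset.mem_union.mp hm with h' | h'
      · exact h'
      · exact absurd h' (hdij x (hC' hx))
  have hinj : ∀ e ∈ E'.splits, ∀ f ∈ E'.splits, φ e = φ f → e = f := by
    intro e he f hf heq
    rcases htri e he with hbe | ⟨hbe1, hbe⟩ | ⟨hbe1, hbe2, hφe, hbeU⟩ <;>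
      rcases htri f hf with hbf | ⟨hbf1, hbf⟩ | ⟨hbf1, hbf2, hφf, hbfU⟩
    · -- B₁ B₁
      obtain ⟨A, C, heA, hunA, -, hA, -, -, -, hφeA⟩ := hP1 e he hbe
      obtain ⟨A', C', hfA, hunA', -, -, -, -, -, hφfA⟩ := hP1 f hf hbf
      have hsubA : A ⊆ B₁ := hunA ▸ Finset.subset_union_left
      have hsubC : C ⊆ B₁ := hunA ▸ Finset.subset_union_right
      have hsubC' : C' ⊆ B₁ := hunA' ▸ Finset.subset_union_right
      rw [hφeA, hφfA] at heq
      rcases Sym2.eq_iff.mp heq with ⟨g1, g2⟩ | ⟨g1, g2⟩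
      · rw [heA, hfA, g1, hcancel B₁ B₂ hd C C' hsubC hsubC' g2]
      · exfalso
        exact hcontra B₂ ⟨v, hv⟩
          (fun x hx => hsubA (g1.symm ▸ Finset.mem_union_right C' hx)) subset_rfl
    · -- B₁ B₂
      obtain ⟨A, C, heA, hunA, -, hA, -, -, -, hφeA⟩ := hP1 e he hbe
      obtain ⟨A', C', hfA, hunA', -, -, hC', -, -, hφfA⟩ := hP2 f hf hbf1 hbf
      have hsubA : A ⊆ B₁ := hunA ▸ Finset.subset_union_left
      have hsubA' : A' ⊆ B₂ := hunA' ▸ Finset.subset_union_left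
      have hsubC' : C' ⊆ B₂ := hunA' ▸ Finset.subset_union_right
      rw [hφeA, hφfA] at heq
      exfalso
      rcases Sym2.eq_iff.mp heq with ⟨g1, g2⟩ | ⟨g1, g2⟩
      · exact hcontra A hA hsubA (fun x hx => hsubA' (g1 ▸ hx))
      · exact hcontra C' hC'
          (fun x hx => hsubA (g1.symm ▸ Finset.mem_union_left B₁ hx)) hsubC'
    · -- B₁ other
      exfalso
      have hbl := congrArg blockOf heq
      rw [hφblkB e he (Or.inl hbe), hφf] at hbl
      exact hbfU hbl.symm
    · -- B₂ B₁
      obtain ⟨A, C, heA, hunA, -, hA, -, -, -, hφeA⟩ := hP2 e he hbe1 hbe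
      obtain ⟨A', C', hfA, hunA', -, -, hC', -, -, hφfA⟩ := hP1 f hf hbf
      have hsubA : A ⊆ B₂ := hunA ▸ Finset.subset_union_left
      have hsubA' : A' ⊆ B₁ := hunA' ▸ Finset.subset_union_left
      have hsubC' : C' ⊆ B₁ := hunA' ▸ Finset.subset_union_right
      rw [hφeA, hφfA] at heq
      exfalso
      rcases Sym2.eq_iff.mp heq with ⟨g1, g2⟩ | ⟨g1, g2⟩
      · exact hcontra A hA (fun x hx => hsubA' (g1 ▸ hx)) hsubA
      · exact hcontra C' hC' hsubC'
          (fun x hx => hsubA (g1.symm ▸ Finset.mem_union_left B₂ hx))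
    · -- B₂ B₂
      obtain ⟨A, C, heA, hunA, -, hA, -, -, -, hφeA⟩ := hP2 e he hbe1 hbe
      obtain ⟨A', C', hfA, hunA', -, -, -, -, -, hφfA⟩ := hP2 f hf hbf1 hbf
      have hsubA : A ⊆ B₂ := hunA ▸ Finset.subset_union_left
      have hsubC : C ⊆ B₂ := hunA ▸ Finset.subset_union_right
      have hsubC' : C' ⊆ B₂ := hunA' ▸ Finset.subset_union_right
      rw [hφeA, hφfA] at heq
      rcases Sym2.eq_iff.mp heq with ⟨g1, g2⟩ | ⟨g1, g2⟩
      · rw [heA, hfA, g1, hcancel B₂ B₁ hd' C C' hsubC hsubC' g2]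
      · exfalso
        exact hcontra B₁ ⟨u, hu⟩ subset_rfl
          (fun x hx => hsubA (g1.symm ▸ Finset.mem_union_right C' hx))
    · -- B₂ other
      exfalso
      have hbl := congrArg blockOf heq
      rw [hφblkB e he (Or.inr ⟨hbe1, hbe⟩), hφf] at hbl
      exact hbfU hbl.symm
    · -- other B₁
      exfalso
      have hbl := congrArg blockOf heq
      rw [hφblkB f hf (Or.inl hbf), hφe] at hbl
      exact hbeU hbl
    · -- other B₂
      exfalso
      have hbl := congrArg blockOf heq
      rw [hφblkB f hf (Or.inr ⟨hbf1, hbf⟩), hφe] at hbl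
      exact hbeU hbl
    · -- other other
      rw [hφe, hφf] at heq
      exact heq
  have he₀img : e₀ ∉ E'.splits.image φ := by
    intro hmem
    obtain ⟨e, he, heq⟩ := Finset.mem_image.mp hmem
    rcases htri e he with hbe | ⟨hbe1, hbe⟩ | ⟨hbe1, hbe2, hφe, hbeU⟩
    · obtain ⟨A, C, heA, hunA, -, hA, hC, -, -, hφeA⟩ := hP1 e he hbe
      have hsubA : A ⊆ B₁ := hunA ▸ Finset.subset_union_left
      have hsubC : C ⊆ B₁ := hunA ▸ Finset.subset_union_right
      rw [hφeA, he₀] at heq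
      rcases Sym2.eq_iff.mp heq with ⟨g1, g2⟩ | ⟨g1, g2⟩
      · exact hcontra C hC hsubC (fun x hx => g2 ▸ Finset.mem_union_left B₂ hx)
      · exact hcontra A hA hsubA (fun x hx => g1 ▸ hx)
    · obtain ⟨A, C, heA, hunA, -, hA, hC, -, -, hφeA⟩ := hP2 e he hbe1 hbe
      have hsubA : A ⊆ B₂ := hunA ▸ Finset.subset_union_left
      have hsubC : C ⊆ B₂ := hunA ▸ Finset.subset_union_right
      rw [hφeA, he₀] at heq
      rcases Sym2.eq_iff.mp heq with ⟨g1, g2⟩ | ⟨g1, g2⟩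
      · exact hcontra B₁ ⟨u, hu⟩ subset_rfl
          (fun x hx => g2 ▸ Finset.mem_union_right C hx)
      · exact hcontra C hC (fun x hx => g2 ▸ Finset.mem_union_left B₁ hx) hsubC
    · rw [hφe] at heq
      exact hbeU (by rw [heq, he₀, blockOf_mk])
  refine ⟨⟨insert (B₁ ∪ B₂) ((E'.blocks.erase B₁).erase B₂),
    insert e₀ (E'.splits.image φ), ?_, ?_, ?_, ?_, ?_⟩, ?_, ⟨?_, ?_, ?_⟩, ?_⟩
  · -- nonempty_blocks
    intro B hB
    rcases Finset.mem_insert.mp hB with rfl | hB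
    · exact ⟨u, Finset.mem_union_left _ hu⟩
    · exact E'.nonempty_blocks B (Finset.mem_of_mem_erase (Finset.mem_of_mem_erase hB))
  · -- cover
    intro x
    obtain ⟨B, ⟨hB, hxB⟩, huniq⟩ := E'.cover x
    by_cases hXB : B = B₁ ∨ B = B₂
    · refine ⟨B₁ ∪ B₂, ⟨Finset.mem_insert_self _ _, ?_⟩, ?_⟩
      · rcases hXB with rfl | rfl
        · exact Finset.mem_union_left _ hxB
        · exact Finset.mem_union_right _ hxB
      · rintro B' ⟨hB', hxB'⟩
        rcases Finset.mem_insert.mp hB' with rfl | hB'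
        · rfl
        · exfalso
          have hB'blocks := Finset.mem_of_mem_erase (Finset.mem_of_mem_erase hB')
          have hne2 : B' ≠ B₂ := (Finset.mem_erase.mp hB').1
          have hne1 : B' ≠ B₁ := (Finset.mem_erase.mp (Finset.mem_of_mem_erase hB')).1
          have hBB := huniq B' ⟨hB'blocks, hxB'⟩
          rcases hXB with rfl | rfl
          · exact hne1 hBB
          · exact hne2 hBB
    · push_neg at hXB
      refine ⟨B, ⟨Finset.mem_insert_of_mem (Finset.mem_erase.mpr
        ⟨hXB.2, Finset.mem_erase.mpr ⟨hXB.1, hB⟩⟩), hxB⟩, ?_⟩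
      rintro B' ⟨hB', hxB'⟩
      rcases Finset.mem_insert.mp hB' with rfl | hB'
      · exfalso
        rcases Finset.mem_union.mp hxB' with h | h
        · exact hXB.1 (huniq B₁ ⟨h1, h⟩).symm
        · exact hXB.2 (huniq B₂ ⟨h2, h⟩).symm
      · exact huniq B' ⟨Finset.mem_of_mem_erase (Finset.mem_of_mem_erase hB'), hxB'⟩
  · -- split_mem
    intro e he
    rcases Finset.mem_insert.mp he with rfl | he
    · exact ⟨B₁ ∪ B₂, Finset.mem_insert_self _ _, B₁, B₂, he₀, rfl, hdisj12,
        ⟨u, hu⟩, ⟨v, hv⟩⟩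
    · obtain ⟨f, hf, rfl⟩ := Finset.mem_image.mp he
      rcases htri f hf with hbf | ⟨hbf1, hbf⟩ | ⟨hbf1, hbf2, hφf, hbfU⟩
      · obtain ⟨A, C, hfA, hun, hdj, hA, hC, -, -, hφA⟩ := hP1 f hf hbf
        have hsubA : A ⊆ B₁ := hun ▸ Finset.subset_union_left
        refine ⟨B₁ ∪ B₂, Finset.mem_insert_self _ _, A, C ∪ B₂, hφA, ?_, ?_, hA,
          ⟨v, Finset.mem_union_right _ hv⟩⟩
        · rw [← Finset.union_assoc, hun]
        · rw [Finset.disjoint_union_right]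
          exact ⟨hdj, Finset.disjoint_left.mpr (fun x hx hx2 => hd x (hsubA hx) hx2)⟩
      · obtain ⟨A, C, hfA, hun, hdj, hA, hC, -, -, hφA⟩ := hP2 f hf hbf1 hbf
        have hsubA : A ⊆ B₂ := hun ▸ Finset.subset_union_left
        refine ⟨B₁ ∪ B₂, Finset.mem_insert_self _ _, A, C ∪ B₁, hφA, ?_, ?_, hA,
          ⟨u, Finset.mem_union_right _ hu⟩⟩
        · rw [← Finset.union_assoc, hun, Finset.union_comm]
        · rw [Finset.disjoint_union_right]
          exact ⟨hdj, Finset.disjoint_left.mpr (fun x hx hx2 => hd' x (hsubA hx) hx2)⟩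
      · refine ⟨blockOf f, Finset.mem_insert_of_mem (Finset.mem_erase.mpr
          ⟨hbf2, Finset.mem_erase.mpr ⟨hbf1, (hblkmem f hf).1⟩⟩), ?_⟩
        rw [hφf]
        exact (hblkmem f hf).2
  · -- compat
    intro e he f hf hbl
    rcases Finset.mem_insert.mp he with rfl | he <;>
      rcases Finset.mem_insert.mp hf with rfl | hf
    · exact ⟨B₁, B₂, B₁, B₂, he₀, he₀, Or.inr (Or.inl hd0)⟩
    · obtain ⟨f', hf', rfl⟩ := Finset.mem_image.mp hf
      rcases htri f' hf' with hbf | ⟨hbf1, hbf⟩ | ⟨hbf1, hbf2, hφf, hbfU⟩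
      · obtain ⟨A, C, -, hun, -, -, -, -, -, hφA⟩ := hP1 f' hf' hbf
        have hsubA : A ⊆ B₁ := hun ▸ Finset.subset_union_left
        exact ⟨B₁, B₂, A, C ∪ B₂, he₀, hφA, Or.inr (Or.inr (Or.inl
          (hint B₂ A (fun x hx hxA => hd' x hx (hsubA hxA)))))⟩
      · obtain ⟨A, C, -, hun, -, -, -, -, -, hφA⟩ := hP2 f' hf' hbf1 hbf
        have hsubA : A ⊆ B₂ := hun ▸ Finset.subset_union_left
        exact ⟨B₁, B₂, A, C ∪ B₁, he₀, hφA, Or.inl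
          (hint B₁ A (fun x hx hxA => hd x hx (hsubA hxA)))⟩
      · exfalso
        rw [hφf] at hbl
        exact hbfU (by rw [← hbl, he₀, blockOf_mk])
    · obtain ⟨e', he', rfl⟩ := Finset.mem_image.mp he
      rcases htri e' he' with hbe | ⟨hbe1, hbe⟩ | ⟨hbe1, hbe2, hφe, hbeU⟩
      · obtain ⟨A, C, -, hun, -, -, -, -, -, hφA⟩ := hP1 e' he' hbe
        have hsubA : A ⊆ B₁ := hun ▸ Finset.subset_union_left
        exact ⟨A, C ∪ B₂, B₁, B₂, hφA, he₀, Or.inr (Or.inl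
          (hint A B₂ (fun x hx hx2 => hd x (hsubA hx) hx2)))⟩
      · obtain ⟨A, C, -, hun, -, -, -, -, -, hφA⟩ := hP2 e' he' hbe1 hbe
        have hsubA : A ⊆ B₂ := hun ▸ Finset.subset_union_left
        exact ⟨A, C ∪ B₁, B₁, B₂, hφA, he₀, Or.inl
          (hint A B₁ (fun x hx hx2 => hd' x (hsubA hx) hx2))⟩
      · exfalso
        rw [hφe] at hbl
        exact hbeU (by rw [hbl, he₀, blockOf_mk])
    · obtain ⟨e', he', rfl⟩ := Finset.mem_image.mp he
      obtain ⟨f', hf', rfl⟩ := Finset.mem_image.mp hf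
      rcases htri e' he' with hbe | ⟨hbe1, hbe⟩ | ⟨hbe1, hbe2, hφe, hbeU⟩ <;>
        rcases htri f' hf' with hbf | ⟨hbf1, hbf⟩ | ⟨hbf1, hbf2, hφf, hbfU⟩
      · obtain ⟨A, C, heA, hunA, -, -, -, -, huC, hφeA⟩ := hP1 e' he' hbe
        obtain ⟨A', C', hfA, hunA', -, -, -, -, huC', hφfA⟩ := hP1 f' hf' hbf
        have hsubA : A ⊆ B₁ := hunA ▸ Finset.subset_union_left
        have hsubA' : A' ⊆ B₁ := hunA' ▸ Finset.subset_union_left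
        have hc := E'.compat e' he' f' hf' (hbe.trans hbf.symm)
        rw [heA, hfA] at hc
        rw [hφeA, hφfA]
        exact compat_extend huC huC'
          (hint A B₂ (fun x hx hx2 => hd x (hsubA hx) hx2))
          (hint A' B₂ (fun x hx hx2 => hd x (hsubA' hx) hx2)) hc
      · obtain ⟨A, C, -, hunA, -, -, -, -, -, hφeA⟩ := hP1 e' he' hbe
        obtain ⟨A', C', -, hunA', -, -, -, -, -, hφfA⟩ := hP2 f' hf' hbf1 hbf
        have hsubA : A ⊆ B₁ := hunA ▸ Finset.subset_union_left
        have hsubA' : A' ⊆ B₂ := hunA' ▸ Finset.subset_union_left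
        rw [hφeA, hφfA]
        exact compat_of_inl (hint A A' (fun x hx hx' => hd x (hsubA hx) (hsubA' hx')))
      · exfalso
        rw [hφblkB e' he' (Or.inl hbe), hφf] at hbl
        exact hbfU hbl.symm
      · obtain ⟨A, C, -, hunA, -, -, -, -, -, hφeA⟩ := hP2 e' he' hbe1 hbe
        obtain ⟨A', C', -, hunA', -, -, -, -, -, hφfA⟩ := hP1 f' hf' hbf
        have hsubA : A ⊆ B₂ := hunA ▸ Finset.subset_union_left
        have hsubA' : A' ⊆ B₁ := hunA' ▸ Finset.subset_union_left
        rw [hφeA, hφfA]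
        exact compat_of_inl (hint A A' (fun x hx hx' => hd' x (hsubA hx) (hsubA' hx')))
      · obtain ⟨A, C, heA, hunA, -, -, -, -, hvC, hφeA⟩ := hP2 e' he' hbe1 hbe
        obtain ⟨A', C', hfA, hunA', -, -, -, -, hvC', hφfA⟩ := hP2 f' hf' hbf1 hbf
        have hsubA : A ⊆ B₂ := hunA ▸ Finset.subset_union_left
        have hsubA' : A' ⊆ B₂ := hunA' ▸ Finset.subset_union_left
        have hc := E'.compat e' he' f' hf' (hbe.trans hbf.symm)
        rw [heA, hfA] at hc
        rw [hφeA, hφfA]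
        exact compat_extend hvC hvC'
          (hint A B₁ (fun x hx hx2 => hd' x (hsubA hx) hx2))
          (hint A' B₁ (fun x hx hx2 => hd' x (hsubA' hx) hx2)) hc
      · exfalso
        rw [hφblkB e' he' (Or.inr ⟨hbe1, hbe⟩), hφf] at hbl
        exact hbfU hbl.symm
      · exfalso
        rw [hφe, hφblkB f' hf' (Or.inl hbf)] at hbl
        exact hbeU hbl
      · exfalso
        rw [hφe, hφblkB f' hf' (Or.inr ⟨hbf1, hbf⟩)] at hbl
        exact hbeU hbl
      · rw [hφe, hφf] at hbl ⊢
        exact E'.compat e' he' f' hf' hbl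
  · -- separating
    intro B hB x hx y hy hxy
    have hliftsep : ∀ Bc ∈ E'.blocks, x ∈ Bc → y ∈ Bc →
        ∃ e ∈ insert e₀ (E'.splits.image φ), Separates e x y := by
      intro Bc hBc hxc hyc
      obtain ⟨e, he, hsep⟩ := E'.separating Bc hBc x hxc y hyc hxy
      refine ⟨φ e, Finset.mem_insert_of_mem (Finset.mem_image_of_mem φ he), ?_⟩
      rw [hφ]
      exact phi_separates hsep
    rcases Finset.mem_insert.mp hB with rfl | hB
    · rcases Finset.mem_union.mp hx with hx1 | hx2 <;>
        rcases Finset.mem_union.mp hy with hy1 | hy2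
      · exact hliftsep B₁ h1 hx1 hy1
      · exact ⟨e₀, Finset.mem_insert_self _ _, B₁, B₂, he₀, hx1, hy2⟩
      · refine ⟨e₀, Finset.mem_insert_self _ _, B₂, B₁, ?_, hx2, hy1⟩
        rw [he₀]
        exact Sym2.eq_swap
      · exact hliftsep B₂ h2 hx2 hy2
    · exact hliftsep B (Finset.mem_of_mem_erase (Finset.mem_of_mem_erase hB)) hx hy
  · -- card
    rw [Finset.card_insert_of_notMem he₀img,
      Finset.card_image_of_injOn (fun a ha b hb hab => hinj a ha b hb hab)]
  · -- LE' blocks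
    intro B' hB'
    by_cases hb1 : B' = B₁
    · exact ⟨B₁ ∪ B₂, Finset.mem_insert_self _ _, hb1 ▸ Finset.subset_union_left⟩
    by_cases hb2 : B' = B₂
    · exact ⟨B₁ ∪ B₂, Finset.mem_insert_self _ _, hb2 ▸ Finset.subset_union_right⟩
    · exact ⟨B', Finset.mem_insert_of_mem (Finset.mem_erase.mpr
        ⟨hb2, Finset.mem_erase.mpr ⟨hb1, hB'⟩⟩), subset_rfl⟩
  · -- LE' splits
    intro e' he'
    refine ⟨φ e', Finset.mem_insert_of_mem (Finset.mem_image_of_mem φ he'), ?_⟩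
    rcases htri e' he' with hbe | ⟨hbe1, hbe⟩ | ⟨hbe1, hbe2, hφe, hbeU⟩
    · obtain ⟨A, C, heA, hun, -, -, -, -, -, hφA⟩ := hP1 e' he' hbe
      have hsubA : A ⊆ B₁ := hun ▸ Finset.subset_union_left
      have hsubC : C ⊆ B₁ := hun ▸ Finset.subset_union_right
      have e1 : A ∩ B₁ = A := Finset.inter_eq_left.mpr hsubA
      have e2 : (C ∪ B₂) ∩ B₁ = C := by
        rw [Finset.union_inter_distrib_right, Finset.inter_eq_left.mpr hsubC,
          hint B₂ B₁ hd', Finset.union_empty]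
      rw [hφA, hbe, restrict_mk, e1, e2, ← heA]
    · obtain ⟨A, C, heA, hun, -, -, -, -, -, hφA⟩ := hP2 e' he' hbe1 hbe
      have hsubA : A ⊆ B₂ := hun ▸ Finset.subset_union_left
      have hsubC : C ⊆ B₂ := hun ▸ Finset.subset_union_right
      have e1 : A ∩ B₂ = A := Finset.inter_eq_left.mpr hsubA
      have e2 : (C ∪ B₁) ∩ B₂ = C := by
        rw [Finset.union_inter_distrib_right, Finset.inter_eq_left.mpr hsubC,
          hd0, Finset.union_empty]
      rw [hφA, hbe, restrict_mk, e1, e2, ← heA]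
    · rw [hφe]
      exact restrict_blockOf e'
  · -- LE' cut
    intro Ba hBa Bb hBb hab B hB hsa hsb
    rcases Finset.mem_insert.mp hB with rfl | hB
    · have hgetcase : ∀ Bc, Bc ∈ E'.blocks → Bc ⊆ B₁ ∪ B₂ → Bc = B₁ ∨ Bc = B₂ := by
        intro Bc hBc hsub
        obtain ⟨x, hx⟩ := E'.nonempty_blocks Bc hBc
        rcases Finset.mem_union.mp (hsub hx) with h | h
        · exact Or.inl (blocks_eq E' hBc h1 hx h)
        · exact Or.inr (blocks_eq E' hBc h2 hx h)
      rcases hgetcase Ba hBa hsa with ha | ha <;> rcases hgetcase Bb hBb hsb with hb | hb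
      · exact absurd (ha.trans hb.symm) hab
      · refine ⟨B₁, B₂, ?_, by rw [ha], by rw [hb]⟩
        exact Finset.mem_insert_self _ _
      · refine ⟨B₂, B₁, ?_, by rw [ha], by rw [hb]⟩
        exact Finset.mem_insert.mpr (Or.inl (Sym2.eq_swap : (s(B₂, B₁) : Split N) = s(B₁, B₂)))
      · exact absurd (ha.trans hb.symm) hab
    · exfalso
      have hBblocks := Finset.mem_of_mem_erase (Finset.mem_of_mem_erase hB)
      obtain ⟨x, hx⟩ := E'.nonempty_blocks Ba hBa
      obtain ⟨y, hy⟩ := E'.nonempty_blocks Bb hBb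
      exact hab ((blocks_eq E' hBa hBblocks hx (hsa hx)).trans
        (blocks_eq E' hBb hBblocks hy (hsb hy)).symm)
  · -- ne
    intro h
    have h2 : (insert e₀ (E'.splits.image φ)).card = E'.splits.card :=
      congrArg (fun W : WaldTop N => W.splits.card) h
    rw [Finset.card_insert_of_notMem he₀img,
      Finset.card_image_of_injOn (fun a ha b hb hab => hinj a ha b hb hab)] at h2
    omega

end Wald

open Wald in
/-- Every wald topology `E'` with fewer than `2N−3` splits can be
extended: there is a wald topology `E` with one more split and `E' < E`. -/
theorem stmt_14 {N : ℕ} (hN : 3 ≤ N) (E' : WaldTop N)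
    (hcard : E'.splits.card < 2 * N - 3) :
    ∃ E : WaldTop N, E.splits.card = E'.splits.card + 1 ∧ LE' E' E ∧ E ≠ E' := by
  by_cases hb : ∃ B₁ ∈ E'.blocks, ∃ B₂ ∈ E'.blocks, B₁ ≠ B₂
  · obtain ⟨B₁, h1, B₂, h2, h12⟩ := hb
    exact Wald.extend_merge E' h1 h2 h12
  · push_neg at hb
    have hNpos : 0 < N := by omega
    obtain ⟨B₀, ⟨hB₀, hu₀⟩, -⟩ := E'.cover ⟨0, hNpos⟩
    have hall : ∀ B ∈ E'.blocks, B = B₀ := fun B hB => hb B hB B₀ hB₀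
    have hB₀univ : B₀ = Finset.univ := by
      ext x
      simp only [Finset.mem_univ, iff_true]
      obtain ⟨B, ⟨hB, hxB⟩, -⟩ := E'.cover x
      rw [← hall B hB]
      exact hxB
    have hblocks : E'.blocks = {Finset.univ} := by
      ext B
      simp only [Finset.mem_singleton]
      constructor
      · intro hB
        rw [hall B hB, hB₀univ]
      · rintro rfl
        rw [← hB₀univ]
        exact hB₀
    exact Wald.extend_single hN E' hblocks hcard
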